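/- If merge trees M and N are ε-interleaved, then they admit compatible presentations P_M, P_N with ‖L(P_M) − L(P_N)‖_∞ = ε. Combined with the converse direction, the ∞-presentation semi-distance equals the interleaving distance: d̂_I^∞(M,N) = d_I(M,N), and hence d_I^∞ = d_I. -/

import Mathlib

open scoped ENNReal NNReal

/-- A persistent set: a functor `ℝ → Set`, with `ℝ` regarded as a poset category. -/
structure PersistentSet where
  obj : ℝ → Type
  map : ∀ {s t : ℝ}, s ≤ t → obj s → obj t
  map_id : ∀ (t : ℝ) (x : obj t), map (le_refl t) x = x
  map_comp : ∀ {s t u : ℝ} (h1 : s ≤ t) (h2 : t ≤ u) (x : obj s),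
    map h2 (map h1 x) = map (le_trans h1 h2) x

/-- An `ε`-interleaving between persistent sets `M` and `N`. -/
def Interleaved (M N : PersistentSet) (ε : ℝ) : Prop :=
  ∃ (hε : 0 ≤ ε) (φ : ∀ t, M.obj t → N.obj (t + ε)) (ψ : ∀ t, N.obj t → M.obj (t + ε)),
    (∀ (s t : ℝ) (h : s ≤ t) (x : M.obj s),
      φ t (M.map h x) = N.map (by linarith : s + ε ≤ t + ε) (φ s x)) ∧
    (∀ (s t : ℝ) (h : s ≤ t) (x : N.obj s),
      ψ t (N.map h x) = M.map (by linarith : s + ε ≤ t + ε) (ψ s x)) ∧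
    (∀ (s : ℝ) (x : M.obj s), ψ (s + ε) (φ s x) = M.map (by linarith : s ≤ s + ε + ε) x) ∧
    (∀ (s : ℝ) (x : N.obj s), φ (s + ε) (ψ s x) = N.map (by linarith : s ≤ s + ε + ε) x)

/-- A persistent set is constructible if it has a finite set of critical values:
it is empty before the first critical value, and the internal maps are
isomorphisms between consecutive critical values. -/
def Constructible (M : PersistentSet) : Prop :=
  ∃ τ : Finset ℝ,
    (∀ t : ℝ, (∀ s ∈ τ, t < s) → IsEmpty (M.obj t)) ∧
    (∀ (s t : ℝ) (h : s ≤ t), (∀ c ∈ τ, c ≤ s ∨ t < c) → Function.Bijective (M.map h))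

/-- A merge tree: a constructible persistent set with finite values which is
eventually a singleton. -/
structure MergeTree where
  toPS : PersistentSet
  constructible : Constructible toPS
  finite : ∀ t, Finite (toPS.obj t)
  eventually_one : ∃ T : ℝ, ∀ t, T ≤ t → (Nonempty (toPS.obj t) ∧ Subsingleton (toPS.obj t))

/-- Combinatorial data of a presentation: `k` generator strands with birth times `γ`,
`l` relation strands with birth times `ρ`, and for each relation two merge maps
`f j`, `g j` into the generators (a map of strands `R_j → G_i` exists iff
`γ i ≤ ρ j`, which is the content of `hf`, `hg`). -/
structure Pres (k l : ℕ) where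
  γ : Fin k → ℝ
  ρ : Fin l → ℝ
  f : Fin l → Fin k
  g : Fin l → Fin k
  hf : ∀ j, γ (f j) ≤ ρ j
  hg : ∀ j, γ (g j) ≤ ρ j

/-- The relation at time `t` identifying the two targets of each relation strand
born by time `t`. -/
def Pres.rel {k l : ℕ} (P : Pres k l) (t : ℝ) :
    {i : Fin k // P.γ i ≤ t} → {i : Fin k // P.γ i ≤ t} → Prop :=
  fun a b => ∃ j : Fin l, P.ρ j ≤ t ∧
    ((P.f j = a.1 ∧ P.g j = b.1) ∨ (P.f j = b.1 ∧ P.g j = a.1))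

/-- The persistent set presented by `P`: the pointwise coequalizer of the pair of maps
`⊔ⱼ Rⱼ ⇉ ⊔ᵢ Gᵢ` of disjoint unions of strands. -/
def Pres.toPS {k l : ℕ} (P : Pres k l) : PersistentSet where
  obj t := Quot (P.rel t)
  map := fun {s t} h =>
    Quot.lift (fun a => Quot.mk (P.rel t) ⟨a.1, le_trans a.2 h⟩)
      (fun a b hab => Quot.sound (by
        obtain ⟨j, hj, hc⟩ := hab
        exact ⟨j, le_trans hj h, hc⟩))
  map_id := fun t x => Quot.inductionOn x fun a => rfl
  map_comp := fun h1 h2 x => Quot.inductionOn x fun a => rfl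

/-- An isomorphism of persistent sets: a natural family of bijections. -/
structure PSIso (M N : PersistentSet) where
  hom : ∀ t, M.obj t → N.obj t
  natural : ∀ {s t : ℝ} (h : s ≤ t) (x : M.obj s), hom t (M.map h x) = N.map h (hom s x)
  bij : ∀ t, Function.Bijective (hom t)

/-- `P` is a presentation of the persistent set `M`. -/
def IsPresentation {k l : ℕ} (P : Pres k l) (M : PersistentSet) : Prop :=
  Nonempty (PSIso P.toPS M)

/-- Two presentations are compatible if their underlying 0-1 presentation matrices agree:
entry `(i,j)` is 1 iff one of the two merge maps of relation `j` lands in generator `i`. -/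
def Compatible {k l : ℕ} (P Q : Pres k l) : Prop :=
  ∀ (i : Fin k) (j : Fin l), (P.f j = i ∨ P.g j = i) ↔ (Q.f j = i ∨ Q.g j = i)

/-- The `ℓp`-norm of a finite vector of reals, `p ∈ [1,∞]`. -/
noncomputable def lpNorm (p : ℝ≥0∞) {n : ℕ} (x : Fin n → ℝ) : ℝ :=
  if p = ⊤ then ⨆ i, |x i| else (∑ i, |x i| ^ p.toReal) ^ (1 / p.toReal)

/-- The difference of the label vectors of two compatible presentations: the vector of
differences of generator birth times followed by differences of relation birth times. -/
noncomputable def labelDiff {k l : ℕ} (P Q : Pres k l) : Fin (k + l) → ℝ :=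
  Fin.append (fun i => P.γ i - Q.γ i) (fun j => P.ρ j - Q.ρ j)

/-- The `p`-presentation semi-distance between merge trees. -/
noncomputable def dHat (p : ℝ≥0∞) (M N : MergeTree) : ℝ :=
  sInf {c | ∃ (k l : ℕ) (P Q : Pres k l), Compatible P Q ∧
    IsPresentation P M.toPS ∧ IsPresentation Q N.toPS ∧
    c = lpNorm p (labelDiff P Q)}

/-- The `p`-presentation distance: the path pseudometric induced by `dHat`. -/
noncomputable def dPres (p : ℝ≥0∞) (M N : MergeTree) : ℝ :=
  sInf {c | ∃ (n : ℕ) (Z : Fin (n + 1) → MergeTree), Z 0 = M ∧ Z (Fin.last n) = N ∧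
    c = ∑ i : Fin n, dHat p (Z i.castSucc) (Z i.succ)}

/-- The interleaving distance on persistent sets, as a real number. -/
noncomputable def dIr (M N : PersistentSet) : ℝ :=
  sInf {ε : ℝ | Interleaved M N ε}

lemma PersistentSet.map_map (M : PersistentSet) {s t u : ℝ} (h1 : s ≤ t) (h2 : t ≤ u)
    (x : M.obj s) : M.map h2 (M.map h1 x) = M.map (h1.trans h2) x := M.map_comp h1 h2 x

noncomputable def PSIso.inv {M N : PersistentSet} (e : PSIso M N) (t : ℝ) : N.obj t → M.obj t :=
  fun y => (Equiv.ofBijective _ (e.bij t)).symm y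

lemma PSIso.hom_inv {M N : PersistentSet} (e : PSIso M N) (t : ℝ) (y : N.obj t) :
    e.hom t (e.inv t y) = y := Equiv.ofBijective_apply_symm_apply _ _ _

lemma PSIso.inv_hom {M N : PersistentSet} (e : PSIso M N) (t : ℝ) (x : M.obj t) :
    e.inv t (e.hom t x) = x := Equiv.ofBijective_symm_apply_apply _ _ _

lemma PSIso.inv_natural {M N : PersistentSet} (e : PSIso M N) {s t : ℝ} (h : s ≤ t)
    (y : N.obj s) : e.inv t (N.map h y) = M.map h (e.inv s y) := by
  apply (e.bij t).1
  rw [e.hom_inv, e.natural, e.hom_inv]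

noncomputable def PSIso.symm {M N : PersistentSet} (e : PSIso M N) : PSIso N M where
  hom := e.inv
  natural h y := e.inv_natural h y
  bij t := (Equiv.ofBijective _ (e.bij t)).symm.bijective

def PSIso.trans {M N P : PersistentSet} (e : PSIso M N) (f : PSIso N P) : PSIso M P where
  hom t := f.hom t ∘ e.hom t
  natural h x := by simp [e.natural, f.natural]
  bij t := (f.bij t).comp (e.bij t)

lemma Interleaved.congr {M M' N N' : PersistentSet} (eM : PSIso M M') (eN : PSIso N N')
    {ε : ℝ} (h : Interleaved M N ε) : Interleaved M' N' ε := by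
  obtain ⟨hε, φ, ψ, natφ, natψ, tri1, tri2⟩ := h
  refine ⟨hε, fun t x => eN.hom _ (φ t (eM.inv t x)), fun t y => eM.hom _ (ψ t (eN.inv t y)),
    ?_, ?_, ?_, ?_⟩
  · intro s t h x
    dsimp only
    rw [eM.inv_natural, natφ, eN.natural]
  · intro s t h x
    dsimp only
    rw [eN.inv_natural, natψ, eM.natural]
  · intro s x
    dsimp only
    rw [eN.inv_hom, tri1, eM.natural, eM.hom_inv]
  · intro s x
    dsimp only
    rw [eM.inv_hom, tri2, eN.natural, eN.hom_inv]

lemma Interleaved.comp {M N P : PersistentSet} {ε1 ε2 : ℝ}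
    (h1 : Interleaved M N ε1) (h2 : Interleaved N P ε2) : Interleaved M P (ε1 + ε2) := by
  obtain ⟨hε1, φ1, ψ1, natφ1, natψ1, tri11, tri12⟩ := h1
  obtain ⟨hε2, φ2, ψ2, natφ2, natψ2, tri21, tri22⟩ := h2
  have key : ∀ t : ℝ, t + ε1 + ε2 ≤ t + (ε1 + ε2) := fun t => by linarith
  refine ⟨by linarith, fun t x => P.map (key t) (φ2 (t + ε1) (φ1 t x)),
    fun t y => M.map (by linarith : t + ε2 + ε1 ≤ t + (ε1 + ε2)) (ψ1 (t + ε2) (ψ2 t y)),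
    ?_, ?_, ?_, ?_⟩
  · intro s t h x
    dsimp only
    simp only [natφ1, natφ2, P.map_map]
  · intro s t h x
    dsimp only
    simp only [natψ2, natψ1, M.map_map]
  · intro s x
    dsimp only
    simp only [natψ2, tri21, natψ1, tri11, M.map_map, N.map_map]
  · intro s x
    dsimp only
    simp only [natφ1, tri12, natφ2, tri22, P.map_map, N.map_map]

universe u v

structure GPres (I : Type u) (J : Type v) where
  γ : I → ℝ
  ρ : J → ℝ
  f : J → I
  g : J → I
  hf : ∀ j, γ (f j) ≤ ρ j
  hg : ∀ j, γ (g j) ≤ ρ j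

def GPres.rel {I J} (P : GPres I J) (t : ℝ) :
    {i : I // P.γ i ≤ t} → {i : I // P.γ i ≤ t} → Prop :=
  fun a b => ∃ j, P.ρ j ≤ t ∧ ((P.f j = a.1 ∧ P.g j = b.1) ∨ (P.f j = b.1 ∧ P.g j = a.1))

def GPres.toPS {I J} (P : GPres I J) : PersistentSet where
  obj t := Quot (P.rel t)
  map {s t} h := Quot.lift (fun a => Quot.mk _ ⟨a.1, le_trans a.2 h⟩)
    (fun a b hab => Quot.sound (by obtain ⟨j, hj, hc⟩ := hab; exact ⟨j, le_trans hj h, hc⟩))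
  map_id t x := Quot.inductionOn x fun a => rfl
  map_comp h1 h2 x := Quot.inductionOn x fun a => rfl

lemma Relation.EqvGen.mono_map {α β : Type*} {r : α → α → Prop} {r' : β → β → Prop} (m : α → β)
    (hm : ∀ x y, r x y → r' (m x) (m y)) {a b : α} (h : Relation.EqvGen r a b) :
    Relation.EqvGen r' (m a) (m b) := by
  induction h with
  | rel x y h => exact Relation.EqvGen.rel _ _ (hm x y h)
  | refl x => exact Relation.EqvGen.refl _
  | symm x y _ ih => exact Relation.EqvGen.symm _ _ ih
  | trans x y z _ _ ih1 ih2 => exact Relation.EqvGen.trans _ _ _ ih1 ih2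

structure Realization {I J : Type} (P : GPres I J) (M : PersistentSet) where
  u : ∀ i, M.obj (P.γ i)
  relSound : ∀ j, M.map (P.hf j) (u (P.f j)) = M.map (P.hg j) (u (P.g j))
  surj : ∀ (t : ℝ) (y : M.obj t), ∃ (i : I) (h : P.γ i ≤ t), M.map h (u i) = y
  inj : ∀ (t : ℝ) (a b : {i // P.γ i ≤ t}),
    M.map a.2 (u a.1) = M.map b.2 (u b.1) → Relation.EqvGen (P.rel t) a b

variable {I J : Type} {P : GPres I J} {M : PersistentSet}

def Realization.F (R : Realization P M) (t : ℝ) (a : {i // P.γ i ≤ t}) : M.obj t :=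
  M.map a.2 (R.u a.1)

lemma Realization.F_rel (R : Realization P M) {t : ℝ} {a b : {i // P.γ i ≤ t}}
    (hab : P.rel t a b) : R.F t a = R.F t b := by
  obtain ⟨j, hj, hc⟩ := hab
  obtain ⟨a1, ha⟩ := a
  obtain ⟨b1, hb⟩ := b
  rcases hc with ⟨h1, h2⟩ | ⟨h1, h2⟩ <;> subst h1 <;> subst h2 <;> unfold Realization.F
  · calc M.map ha (R.u (P.f j)) = M.map hj (M.map (P.hf j) (R.u (P.f j))) :=
          (M.map_map _ _ _).symm
    _ = M.map hj (M.map (P.hg j) (R.u (P.g j))) := by rw [R.relSound j]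
    _ = M.map hb (R.u (P.g j)) := M.map_map _ _ _
  · calc M.map ha (R.u (P.g j)) = M.map hj (M.map (P.hg j) (R.u (P.g j))) :=
          (M.map_map _ _ _).symm
    _ = M.map hj (M.map (P.hf j) (R.u (P.f j))) := by rw [R.relSound j]
    _ = M.map hb (R.u (P.f j)) := M.map_map _ _ _

def Realization.psIso (R : Realization P M) : PSIso P.toPS M where
  hom t := Quot.lift (R.F t) (fun _ _ hab => R.F_rel hab)
  natural {s t} h x := Quot.inductionOn x fun a => (M.map_map _ _ _).symm
  bij t := by
    constructor
    · intro x y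
      refine Quot.inductionOn x fun a => Quot.inductionOn y fun b h => ?_
      exact Quot.eqvGen_sound (R.inj t a b h)
    · intro y
      obtain ⟨i, h, hi⟩ := R.surj t y
      exact ⟨Quot.mk _ ⟨i, h⟩, hi⟩

def GPres.toPres {k l : ℕ} (P : GPres I J) (eI : Fin k ≃ I) (eJ : Fin l ≃ J) : Pres k l where
  γ := P.γ ∘ eI
  ρ := P.ρ ∘ eJ
  f j := eI.symm (P.f (eJ j))
  g j := eI.symm (P.g (eJ j))
  hf j := by simpa using P.hf (eJ j)
  hg j := by simpa using P.hg (eJ j)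

def GPres.toPresIso {k l : ℕ} (P : GPres I J) (eI : Fin k ≃ I) (eJ : Fin l ≃ J) :
    PSIso (P.toPres eI eJ).toPS P.toPS where
  hom t := Quot.lift (fun a => Quot.mk (P.rel t) ⟨eI a.1, a.2⟩)
    (by
      rintro a b ⟨j, hj, hc⟩
      refine Quot.sound ⟨eJ j, hj, ?_⟩
      rcases hc with ⟨h1, h2⟩ | ⟨h1, h2⟩
      · exact Or.inl ⟨by simpa [GPres.toPres] using congrArg eI h1,
          by simpa [GPres.toPres] using congrArg eI h2⟩
      · exact Or.inr ⟨by simpa [GPres.toPres] using congrArg eI h1,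
          by simpa [GPres.toPres] using congrArg eI h2⟩)
  natural {s t} h x := Quot.inductionOn x fun a => rfl
  bij t := by
    refine Function.bijective_iff_has_inverse.mpr ?_
    refine ⟨Quot.lift (fun b => Quot.mk ((P.toPres eI eJ).rel t)
      ⟨eI.symm b.1, by simpa [GPres.toPres] using b.2⟩) ?_, ?_, ?_⟩
    · rintro a b ⟨j, hj, hc⟩
      refine Quot.sound ⟨eJ.symm j, by simpa [GPres.toPres] using hj, ?_⟩
      rcases hc with ⟨h1, h2⟩ | ⟨h1, h2⟩
      · exact Or.inl ⟨by simp [GPres.toPres, h1], by simp [GPres.toPres, h2]⟩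
      · exact Or.inr ⟨by simp [GPres.toPres, h1], by simp [GPres.toPres, h2]⟩
    · intro x
      refine Quot.inductionOn x fun a => ?_
      exact congrArg (Quot.mk _) (Subtype.ext (by simp))
    · intro y
      refine Quot.inductionOn y fun b => ?_
      exact congrArg (Quot.mk _) (Subtype.ext (by simp))

lemma Realization.isPresentation {k l : ℕ} (R : Realization P M)
    (eI : Fin k ≃ I) (eJ : Fin l ≃ J) : IsPresentation (P.toPres eI eJ) M :=
  ⟨(P.toPresIso eI eJ).trans R.psIso⟩

section Canonical

variable (M : MergeTree) (τ : Finset ℝ)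

abbrev CanI : Type := (c : {c : ℝ // c ∈ τ}) × M.toPS.obj c.1

abbrev CanJ : Type :=
  {p : CanI M τ × CanI M τ // ∃ h : p.1.1.1 ≤ p.2.1.1, M.toPS.map h p.1.2 = p.2.2}

instance : Finite (CanI M τ) := by
  haveI := M.finite
  unfold CanI
  infer_instance

instance : Finite (CanJ M τ) := by
  unfold CanJ
  infer_instance

def canPres : GPres (CanI M τ) (CanJ M τ) where
  γ i := i.1.1
  ρ j := j.1.2.1.1
  f j := j.1.1
  g j := j.1.2
  hf j := j.2.choose
  hg _ := le_refl _

variable {M τ}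

lemma exists_c0
    (hempty : ∀ t : ℝ, (∀ s ∈ τ, t < s) → IsEmpty (M.toPS.obj t))
    (hbij : ∀ (s t : ℝ) (h : s ≤ t), (∀ c ∈ τ, c ≤ s ∨ t < c) →
      Function.Bijective (M.toPS.map h))
    (t : ℝ) (y : M.toPS.obj t) :
    ∃ c0, ∃ _ : c0 ∈ τ, ∃ h : c0 ≤ t,
      (∀ c ∈ τ, c ≤ t → c ≤ c0) ∧ Function.Bijective (M.toPS.map h) := by
  classical
  have hne : (τ.filter (fun c => c ≤ t)).Nonempty := by
    by_contra hS
    rw [Finset.not_nonempty_iff_eq_empty] at hS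
    refine (hempty t fun s hs => ?_).elim y
    by_contra hlt
    exact (Finset.eq_empty_iff_forall_notMem.1 hS s)
      (Finset.mem_filter.2 ⟨hs, le_of_not_gt hlt⟩)
  set c0 := (τ.filter (fun c => c ≤ t)).max' hne with hc0
  have hmem := (τ.filter (fun c => c ≤ t)).max'_mem hne
  rw [Finset.mem_filter] at hmem
  have hle : ∀ c ∈ τ, c ≤ t → c ≤ c0 := fun c hc hct =>
    (τ.filter (fun c => c ≤ t)).le_max' c (Finset.mem_filter.2 ⟨hc, hct⟩)
  exact ⟨c0, hmem.1, hmem.2, hle, hbij c0 t hmem.2 (fun c hc => by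
    by_cases h : c ≤ t
    · exact Or.inl (hle c hc h)
    · exact Or.inr (lt_of_not_ge h))⟩

lemma canRealization
    (hempty : ∀ t : ℝ, (∀ s ∈ τ, t < s) → IsEmpty (M.toPS.obj t))
    (hbij : ∀ (s t : ℝ) (h : s ≤ t), (∀ c ∈ τ, c ≤ s ∨ t < c) →
      Function.Bijective (M.toPS.map h)) :
    Nonempty (Realization (canPres M τ) M.toPS) := by
  classical
  refine ⟨{ u := fun i => i.2, relSound := ?_, surj := ?_, inj := ?_ }⟩
  · intro j
    show M.toPS.map _ j.1.1.2 = M.toPS.map _ j.1.2.2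
    exact (j.2.choose_spec).trans (M.toPS.map_id _ _).symm
  · intro t y
    obtain ⟨c0, hc0τ, h0t, _, hb⟩ := exists_c0 hempty hbij t y
    obtain ⟨x, hx⟩ := hb.2 y
    refine ⟨⟨⟨c0, hc0τ⟩, x⟩, h0t, hx⟩
  · intro t a b hab
    obtain ⟨c0, hc0τ, h0t, hle, hb⟩ :=
      exists_c0 hempty hbij t (M.toPS.map a.2 a.1.2)
    -- reduce any element to its image at c0
    have hup : ∀ p : {i : CanI M τ // (canPres M τ).γ i ≤ t}, p.1.1.1 ≤ c0 :=
      fun p => hle p.1.1.1 p.1.1.2 p.2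
    set top : {i : CanI M τ // (canPres M τ).γ i ≤ t} →
        {i : CanI M τ // (canPres M τ).γ i ≤ t} :=
      fun p => ⟨⟨⟨c0, hc0τ⟩, M.toPS.map (hup p) p.1.2⟩, h0t⟩ with htop
    have hrel : ∀ p, (canPres M τ).rel t p (top p) := by
      intro p
      refine ⟨⟨(p.1, (top p).1), hup p, rfl⟩, h0t, Or.inl ⟨rfl, rfl⟩⟩
    have hF : ∀ p, M.toPS.map h0t ((top p).1.2) = M.toPS.map p.2 p.1.2 :=
      fun p => M.toPS.map_map _ _ _
    have heq : top a = top b := by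
      have : M.toPS.map h0t ((top a).1.2) = M.toPS.map h0t ((top b).1.2) := by
        rw [hF, hF]; exact hab
      have h2 : (top a).1.2 = (top b).1.2 := hb.1 this
      apply Subtype.ext
      show (top a).1 = (top b).1
      simp only [htop]
      exact congrArg (Sigma.mk (⟨c0, hc0τ⟩ : {c : ℝ // c ∈ τ})) (by simpa [htop] using h2)
    refine Relation.EqvGen.trans _ _ _ (Relation.EqvGen.rel _ _ (hrel a)) ?_
    rw [heq]
    exact Relation.EqvGen.symm _ _ (Relation.EqvGen.rel _ _ (hrel b))

lemma MergeTree.exists_realization (M : MergeTree) :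
    ∃ (I J : Type) (_ : Finite I) (_ : Finite J) (P : GPres I J),
      Nonempty (Realization P M.toPS) := by
  obtain ⟨τ, hempty, hbij⟩ := M.constructible
  exact ⟨CanI M τ, CanJ M τ, inferInstance, inferInstance, canPres M τ,
    canRealization hempty hbij⟩

end Canonical

section Mix

variable {IM JM IN JN : Type} (PM : GPres IM JM) (PN : GPres IN JN)

@[reducible] def mixF : (JM ⊕ JN) ⊕ (IN ⊕ IM) → IM ⊕ IN :=
  Sum.elim (Sum.elim (fun j => Sum.inl (PM.f j)) (fun j => Sum.inr (PN.f j)))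
    (Sum.elim (fun i => Sum.inr i) (fun i => Sum.inl i))

@[reducible] def mixG (aIdx : IN → IM) (bIdx : IM → IN) :
    (JM ⊕ JN) ⊕ (IN ⊕ IM) → IM ⊕ IN :=
  Sum.elim (Sum.elim (fun j => Sum.inl (PM.g j)) (fun j => Sum.inr (PN.g j)))
    (Sum.elim (fun i => Sum.inl (aIdx i)) (fun i => Sum.inr (bIdx i)))

variable (ε : ℝ) (aIdx : IN → IM) (bIdx : IM → IN)

def mixP (hε : 0 ≤ ε) (aLe : ∀ i, PM.γ (aIdx i) ≤ PN.γ i + ε)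
    (bLe : ∀ i, PN.γ (bIdx i) ≤ PM.γ i + ε) :
    GPres (IM ⊕ IN) ((JM ⊕ JN) ⊕ (IN ⊕ IM)) where
  γ := Sum.elim PM.γ (fun i => PN.γ i + ε)
  ρ := Sum.elim (Sum.elim PM.ρ (fun j => PN.ρ j + ε))
    (Sum.elim (fun i => PN.γ i + ε) (fun i => PM.γ i + ε + ε))
  f := mixF PM PN
  g := mixG PM PN aIdx bIdx
  hf := by
    rintro ((j|j)|(i|i))
    · exact PM.hf j
    · exact add_le_add_left (PN.hf j) ε
    · exact le_refl _
    · show PM.γ i ≤ PM.γ i + ε + ε; linarith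
  hg := by
    rintro ((j|j)|(i|i))
    · exact PM.hg j
    · exact add_le_add_left (PN.hg j) ε
    · exact aLe i
    · exact add_le_add_left (bLe i) ε

def mixQ (hε : 0 ≤ ε) (aLe : ∀ i, PM.γ (aIdx i) ≤ PN.γ i + ε)
    (bLe : ∀ i, PN.γ (bIdx i) ≤ PM.γ i + ε) :
    GPres (IM ⊕ IN) ((JM ⊕ JN) ⊕ (IN ⊕ IM)) where
  γ := Sum.elim (fun i => PM.γ i + ε) PN.γ
  ρ := Sum.elim (Sum.elim (fun j => PM.ρ j + ε) PN.ρ)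
    (Sum.elim (fun i => PN.γ i + ε + ε) (fun i => PM.γ i + ε))
  f := mixF PM PN
  g := mixG PM PN aIdx bIdx
  hf := by
    rintro ((j|j)|(i|i))
    · exact add_le_add_left (PM.hf j) ε
    · exact PN.hf j
    · show PN.γ i ≤ PN.γ i + ε + ε; linarith
    · exact le_refl _
  hg := by
    rintro ((j|j)|(i|i))
    · exact add_le_add_left (PM.hg j) ε
    · exact PN.hg j
    · exact add_le_add_left (aLe i) ε
    · exact bLe i

end Mix

lemma exists_compatible (M N : MergeTree) {ε : ℝ} (hIL : Interleaved M.toPS N.toPS ε) :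
    ∃ (k l : ℕ) (P Q : Pres k l), Compatible P Q ∧ IsPresentation P M.toPS ∧
      IsPresentation Q N.toPS ∧ ∀ m : Fin (k + l), |labelDiff P Q m| = ε := by
  classical
  obtain ⟨IM, JM, hIM, hJM, PM, ⟨RM⟩⟩ := M.exists_realization
  obtain ⟨IN, JN, hIN, hJN, PN, ⟨RN⟩⟩ := N.exists_realization
  obtain ⟨hε, φ, ψ, natφ, natψ, tri1, tri2⟩ := hIL
  choose aIdx aLe aEq using fun i : IN => RM.surj (PN.γ i + ε) (ψ (PN.γ i) (RN.u i))
  choose bIdx bLe bEq using fun i : IM => RN.surj (PM.γ i + ε) (φ (PM.γ i) (RM.u i))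
  let P' := mixP PM PN ε aIdx bIdx hε aLe bLe
  let Q' := mixQ PM PN ε aIdx bIdx hε aLe bLe
  let uP : ∀ i', M.toPS.obj (P'.γ i') := fun i' =>
    match i' with
    | Sum.inl i => RM.u i
    | Sum.inr i => ψ (PN.γ i) (RN.u i)
  let uQ : ∀ i', N.toPS.obj (Q'.γ i') := fun i' =>
    match i' with
    | Sum.inl i => φ (PM.γ i) (RM.u i)
    | Sum.inr i => RN.u i
  have RP : Realization P' M.toPS := by
    refine ⟨uP, ?_, ?_, ?_⟩
    · rintro ((j|j)|(i|i))
      · exact RM.relSound j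
      · exact (natψ _ _ (PN.hf j) _).symm.trans
          ((congrArg (ψ (PN.ρ j)) (RN.relSound j)).trans (natψ _ _ (PN.hg j) _))
      · exact (M.toPS.map_id _ _).trans (aEq i).symm
      · exact (tri1 (PM.γ i) (RM.u i)).symm.trans
          ((congrArg (ψ (PM.γ i + ε)) (bEq i).symm).trans (natψ _ _ (bLe i) _))
    · intro t y
      obtain ⟨i, h, hy⟩ := RM.surj t y
      exact ⟨Sum.inl i, h, hy⟩
    · intro t a b hab
      have hred : ∀ p : {i' // P'.γ i' ≤ t}, ∃ q : {i : IM // PM.γ i ≤ t},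
          Relation.EqvGen (P'.rel t) p ⟨Sum.inl q.1, q.2⟩ ∧
            M.toPS.map p.2 (uP p.1) = M.toPS.map q.2 (RM.u q.1) := by
        rintro ⟨(i|i), hp⟩
        · exact ⟨⟨i, hp⟩, Relation.EqvGen.refl _, rfl⟩
        · have hp' : PN.γ i + ε ≤ t := hp
          refine ⟨⟨aIdx i, (aLe i).trans hp'⟩, ?_, ?_⟩
          · exact Relation.EqvGen.rel _ _ ⟨Sum.inr (Sum.inl i), hp', Or.inl ⟨rfl, rfl⟩⟩
          · show M.toPS.map hp (ψ (PN.γ i) (RN.u i)) = _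
            rw [← M.toPS.map_map (aLe i) hp', aEq i]
            rfl
      obtain ⟨qa, ea, fa⟩ := hred a
      obtain ⟨qb, eb, fb⟩ := hred b
      have hq := RM.inj t qa qb (by rw [← fa, ← fb]; exact hab)
      have lift := Relation.EqvGen.mono_map (r' := P'.rel t)
        (fun q : {i : IM // PM.γ i ≤ t} => (⟨Sum.inl q.1, q.2⟩ : {i' // P'.γ i' ≤ t}))
        (fun x y hxy => by
          obtain ⟨j, hj, hc⟩ := hxy
          refine ⟨Sum.inl (Sum.inl j), hj, ?_⟩
          rcases hc with ⟨h1, h2⟩ | ⟨h1, h2⟩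
          · exact Or.inl ⟨congrArg Sum.inl h1, congrArg Sum.inl h2⟩
          · exact Or.inr ⟨congrArg Sum.inl h1, congrArg Sum.inl h2⟩) hq
      exact Relation.EqvGen.trans _ _ _ ea
        (Relation.EqvGen.trans _ _ _ lift (Relation.EqvGen.symm _ _ eb))
  have RQ : Realization Q' N.toPS := by
    refine ⟨uQ, ?_, ?_, ?_⟩
    · rintro ((j|j)|(i|i))
      · exact (natφ _ _ (PM.hf j) _).symm.trans
          ((congrArg (φ (PM.ρ j)) (RM.relSound j)).trans (natφ _ _ (PM.hg j) _))
      · exact RN.relSound j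
      · exact (tri2 (PN.γ i) (RN.u i)).symm.trans
          ((congrArg (φ (PN.γ i + ε)) (aEq i).symm).trans (natφ _ _ (aLe i) _))
      · exact (N.toPS.map_id _ _).trans (bEq i).symm
    · intro t y
      obtain ⟨i, h, hy⟩ := RN.surj t y
      exact ⟨Sum.inr i, h, hy⟩
    · intro t a b hab
      have hred : ∀ p : {i' // Q'.γ i' ≤ t}, ∃ q : {i : IN // PN.γ i ≤ t},
          Relation.EqvGen (Q'.rel t) p ⟨Sum.inr q.1, q.2⟩ ∧
            N.toPS.map p.2 (uQ p.1) = N.toPS.map q.2 (RN.u q.1) := by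
        rintro ⟨(i|i), hp⟩
        · have hp' : PM.γ i + ε ≤ t := hp
          refine ⟨⟨bIdx i, (bLe i).trans hp'⟩, ?_, ?_⟩
          · exact Relation.EqvGen.rel _ _ ⟨Sum.inr (Sum.inr i), hp', Or.inl ⟨rfl, rfl⟩⟩
          · show N.toPS.map hp (φ (PM.γ i) (RM.u i)) = _
            rw [← N.toPS.map_map (bLe i) hp', bEq i]
            rfl
        · exact ⟨⟨i, hp⟩, Relation.EqvGen.refl _, rfl⟩
      obtain ⟨qa, ea, fa⟩ := hred a
      obtain ⟨qb, eb, fb⟩ := hred b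
      have hq := RN.inj t qa qb (by rw [← fa, ← fb]; exact hab)
      have lift := Relation.EqvGen.mono_map (r' := Q'.rel t)
        (fun q : {i : IN // PN.γ i ≤ t} => (⟨Sum.inr q.1, q.2⟩ : {i' // Q'.γ i' ≤ t}))
        (fun x y hxy => by
          obtain ⟨j, hj, hc⟩ := hxy
          refine ⟨Sum.inl (Sum.inr j), hj, ?_⟩
          rcases hc with ⟨h1, h2⟩ | ⟨h1, h2⟩
          · exact Or.inl ⟨congrArg Sum.inr h1, congrArg Sum.inr h2⟩
          · exact Or.inr ⟨congrArg Sum.inr h1, congrArg Sum.inr h2⟩) hq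
      exact Relation.EqvGen.trans _ _ _ ea
        (Relation.EqvGen.trans _ _ _ lift (Relation.EqvGen.symm _ _ eb))
  haveI := hIM; haveI := hJM; haveI := hIN; haveI := hJN
  obtain ⟨k, ⟨eI⟩⟩ := Finite.exists_equiv_fin (IM ⊕ IN)
  obtain ⟨l, ⟨eJ⟩⟩ := Finite.exists_equiv_fin ((JM ⊕ JN) ⊕ (IN ⊕ IM))
  refine ⟨k, l, P'.toPres eI.symm eJ.symm, Q'.toPres eI.symm eJ.symm,
    fun i j => Iff.rfl, RP.isPresentation _ _, RQ.isPresentation _ _, ?_⟩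
  intro m
  refine Fin.addCases (motive := fun m =>
    |labelDiff (P'.toPres eI.symm eJ.symm) (Q'.toPres eI.symm eJ.symm) m| = ε) ?_ ?_ m
  · intro i
    simp only [labelDiff, Fin.append_left]
    show |P'.γ (eI.symm i) - Q'.γ (eI.symm i)| = ε
    rcases eI.symm i with i'|i'
    · show |PM.γ i' - (PM.γ i' + ε)| = ε
      rw [show PM.γ i' - (PM.γ i' + ε) = -ε from by ring, abs_neg, abs_of_nonneg hε]
    · show |PN.γ i' + ε - PN.γ i'| = ε
      rw [show PN.γ i' + ε - PN.γ i' = ε from by ring, abs_of_nonneg hε]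
  · intro j
    simp only [labelDiff, Fin.append_right]
    show |P'.ρ (eJ.symm j) - Q'.ρ (eJ.symm j)| = ε
    rcases eJ.symm j with (j'|j')|(i'|i')
    · show |PM.ρ j' - (PM.ρ j' + ε)| = ε
      rw [show PM.ρ j' - (PM.ρ j' + ε) = -ε from by ring, abs_neg, abs_of_nonneg hε]
    · show |PN.ρ j' + ε - PN.ρ j'| = ε
      rw [show PN.ρ j' + ε - PN.ρ j' = ε from by ring, abs_of_nonneg hε]
    · show |PN.γ i' + ε - (PN.γ i' + ε + ε)| = ε
      rw [show PN.γ i' + ε - (PN.γ i' + ε + ε) = -ε from by ring, abs_neg, abs_of_nonneg hε]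
    · show |PM.γ i' + ε + ε - (PM.γ i' + ε)| = ε
      rw [show PM.γ i' + ε + ε - (PM.γ i' + ε) = ε from by ring, abs_of_nonneg hε]

section Converse

lemma compat_pair {k l : ℕ} {P Q : Pres k l} (hC : Compatible P Q) (j : Fin l) {a b : Fin k}
    (h : (P.f j = a ∧ P.g j = b) ∨ (P.f j = b ∧ P.g j = a)) :
    (Q.f j = a ∧ Q.g j = b) ∨ (Q.f j = b ∧ Q.g j = a) := by
  have ha : Q.f j = a ∨ Q.g j = a := (hC a j).1
    (by rcases h with ⟨h1, h2⟩ | ⟨h1, h2⟩; exacts [Or.inl h1, Or.inr h2])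
  have hb : Q.f j = b ∨ Q.g j = b := (hC b j).1
    (by rcases h with ⟨h1, h2⟩ | ⟨h1, h2⟩; exacts [Or.inr h2, Or.inl h1])
  have hf : P.f j = Q.f j ∨ P.g j = Q.f j := (hC (Q.f j) j).2 (Or.inl rfl)
  have hg : P.f j = Q.g j ∨ P.g j = Q.g j := (hC (Q.g j) j).2 (Or.inr rfl)
  rcases ha with ha | ha <;> rcases hb with hb | hb
  · have hab : a = b := ha.symm.trans hb
    have hga : Q.g j = a := by
      rcases hg with h3 | h3 <;> rcases h with ⟨h1, h2⟩ | ⟨h1, h2⟩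
      · exact h3.symm.trans h1
      · exact h3.symm.trans (h1.trans hab.symm)
      · exact h3.symm.trans (h2.trans hab.symm)
      · exact h3.symm.trans h2
    exact Or.inl ⟨ha, hga.trans hab⟩
  · exact Or.inl ⟨ha, hb⟩
  · exact Or.inr ⟨hb, ha⟩
  · have hab : a = b := ha.symm.trans hb
    have hfa : Q.f j = a := by
      rcases hf with h3 | h3 <;> rcases h with ⟨h1, h2⟩ | ⟨h1, h2⟩
      · exact h3.symm.trans h1
      · exact h3.symm.trans (h1.trans hab.symm)
      · exact h3.symm.trans (h2.trans hab.symm)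
      · exact h3.symm.trans h2
    exact Or.inl ⟨hfa, hb⟩

lemma rel_shift {k l : ℕ} {P Q : Pres k l} (hC : Compatible P Q) {δ : ℝ}
    (hγ : ∀ i, Q.γ i ≤ P.γ i + δ) (hρ : ∀ j, Q.ρ j ≤ P.ρ j + δ) (t : ℝ)
    (a b : {i // P.γ i ≤ t}) (hab : P.rel t a b) :
    Q.rel (t + δ) ⟨a.1, (hγ a.1).trans (add_le_add_left a.2 δ)⟩
      ⟨b.1, (hγ b.1).trans (add_le_add_left b.2 δ)⟩ := by
  obtain ⟨j, hj, hc⟩ := hab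
  exact ⟨j, (hρ j).trans (add_le_add_left hj δ), compat_pair hC j hc⟩

lemma compatible_interleaved {k l : ℕ} (P Q : Pres k l) (hC : Compatible P Q) {δ : ℝ}
    (hδ : 0 ≤ δ) (hPQγ : ∀ i, Q.γ i ≤ P.γ i + δ) (hPQρ : ∀ j, Q.ρ j ≤ P.ρ j + δ)
    (hQPγ : ∀ i, P.γ i ≤ Q.γ i + δ) (hQPρ : ∀ j, P.ρ j ≤ Q.ρ j + δ) :
    Interleaved P.toPS Q.toPS δ := by
  have hCs : Compatible Q P := fun i j => (hC i j).symm
  refine ⟨hδ,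
    fun t => Quot.lift (fun a => Quot.mk (Q.rel (t + δ))
        ⟨a.1, (hPQγ a.1).trans (add_le_add_left a.2 δ)⟩)
      (fun a b hab => Quot.sound (rel_shift hC hPQγ hPQρ t a b hab)),
    fun t => Quot.lift (fun a => Quot.mk (P.rel (t + δ))
        ⟨a.1, (hQPγ a.1).trans (add_le_add_left a.2 δ)⟩)
      (fun a b hab => Quot.sound (rel_shift hCs hQPγ hQPρ t a b hab)),
    ?_, ?_, ?_, ?_⟩
  · intro s t h x; exact Quot.inductionOn x fun a => rfl
  · intro s t h x; exact Quot.inductionOn x fun a => rfl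
  · intro s x; exact Quot.inductionOn x fun a => rfl
  · intro s x; exact Quot.inductionOn x fun a => rfl

lemma k_pos {k l : ℕ} {P : Pres k l} {M : MergeTree} (h : IsPresentation P M.toPS) :
    0 < k := by
  by_contra hk
  obtain rfl : k = 0 := Nat.le_zero.mp (not_lt.1 hk)
  obtain ⟨e⟩ := h
  obtain ⟨T, hT⟩ := M.eventually_one
  obtain ⟨y⟩ := (hT T le_rfl).1
  obtain ⟨x, -⟩ := (e.bij T).2 y
  exact Quot.inductionOn (motive := fun _ => False) x fun a => Fin.elim0 a.1

lemma lpNorm_top_le {n : ℕ} (x : Fin n → ℝ) (i : Fin n) : |x i| ≤ lpNorm ⊤ x := by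
  rw [lpNorm, if_pos rfl]
  exact le_ciSup (f := fun i => |x i|) (Set.Finite.bddAbove (Set.finite_range _)) i

lemma lpNorm_top_const {n : ℕ} (hn : n ≠ 0) (x : Fin n → ℝ) {ε : ℝ}
    (hx : ∀ i, |x i| = ε) : lpNorm ⊤ x = ε := by
  haveI : Nonempty (Fin n) := ⟨⟨0, Nat.pos_of_ne_zero hn⟩⟩
  rw [lpNorm, if_pos rfl, show (fun i => |x i|) = fun _ => ε from funext hx, ciSup_const]

end Converse

section Crude

lemma MergeTree.min_crit (M : MergeTree) : ∃ c : ℝ, ∀ t, Nonempty (M.toPS.obj t) → c ≤ t := by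
  obtain ⟨τ, hempty, hbij⟩ := M.constructible
  obtain ⟨T, hT⟩ := M.eventually_one
  have hτ : τ.Nonempty := by
    by_contra h
    rw [Finset.not_nonempty_iff_eq_empty] at h
    exact (hempty T (by simp [h])).false (Classical.choice (hT T le_rfl).1)
  refine ⟨τ.min' hτ, fun t ht => ?_⟩
  by_contra h
  push_neg at h
  exact (hempty t fun s hs => lt_of_lt_of_le h (τ.min'_le s hs)).false (Classical.choice ht)

lemma exists_interleaving (M N : MergeTree) : ∃ ε, Interleaved M.toPS N.toPS ε := by
  classical
  obtain ⟨cM, hcM⟩ := M.min_crit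
  obtain ⟨cN, hcN⟩ := N.min_crit
  obtain ⟨TM, hTM⟩ := M.eventually_one
  obtain ⟨TN, hTN⟩ := N.eventually_one
  refine ⟨max 0 (max (max (TM - cM) (TN - cM)) (max (TM - cN) (TN - cN))), ?_⟩
  set ε := max 0 (max (max (TM - cM) (TN - cM)) (max (TM - cN) (TN - cN))) with hεdef
  have hε0 : (0:ℝ) ≤ ε := le_max_left _ _
  have h1 : TM - cM ≤ ε := ((le_max_left _ _).trans (le_max_left _ _)).trans (le_max_right _ _)
  have h2 : TN - cM ≤ ε := ((le_max_right _ _).trans (le_max_left _ _)).trans (le_max_right _ _)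
  have h3 : TM - cN ≤ ε := ((le_max_left _ _).trans (le_max_right _ _)).trans (le_max_right _ _)
  have h4 : TN - cN ≤ ε := ((le_max_right _ _).trans (le_max_right _ _)).trans (le_max_right _ _)
  have hMN : ∀ t : ℝ, Nonempty (M.toPS.obj t) → TN ≤ t + ε := fun t ht => by
    have := hcM t ht; linarith
  have hNM : ∀ t : ℝ, Nonempty (N.toPS.obj t) → TM ≤ t + ε := fun t ht => by
    have := hcN t ht; linarith
  have hMM : ∀ t : ℝ, Nonempty (M.toPS.obj t) → TM ≤ t + ε + ε := fun t ht => by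
    have := hcM t ht; linarith
  have hNN : ∀ t : ℝ, Nonempty (N.toPS.obj t) → TN ≤ t + ε + ε := fun t ht => by
    have := hcN t ht; linarith
  refine ⟨hε0, fun t x => Classical.choice (hTN _ (hMN t ⟨x⟩)).1,
    fun t y => Classical.choice (hTM _ (hNM t ⟨y⟩)).1, ?_, ?_, ?_, ?_⟩
  · intro s t h x
    exact @Subsingleton.elim _ ((hTN _ (hMN t ⟨M.toPS.map h x⟩)).2) _ _
  · intro s t h x
    exact @Subsingleton.elim _ ((hTM _ (hNM t ⟨N.toPS.map h x⟩)).2) _ _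
  · intro s x
    exact @Subsingleton.elim _ ((hTM _ (hMM s ⟨x⟩)).2) _ _
  · intro s x
    exact @Subsingleton.elim _ ((hTN _ (hNN s ⟨x⟩)).2) _ _

lemma interleaved_self (M : PersistentSet) : Interleaved M M 0 := by
  refine ⟨le_refl 0, fun t x => M.map (by linarith) x, fun t x => M.map (by linarith) x,
    ?_, ?_, ?_, ?_⟩ <;> intros <;> dsimp only <;> simp only [M.map_map]

end Crude

/-- if merge trees `M`, `N` are `ε`-interleaved, then they admit compatible
presentations whose label vectors are at `ℓ∞`-distance `ε`; consequently the
`∞`-presentation semi-distance equals the interleaving distance, and `d_I^∞ = d_I`. -/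
theorem infty_presentation_eq_interleaving :
    (∀ (M N : MergeTree) (ε : ℝ), Interleaved M.toPS N.toPS ε →
      ∃ (k l : ℕ) (P Q : Pres k l), Compatible P Q ∧
        IsPresentation P M.toPS ∧ IsPresentation Q N.toPS ∧
        lpNorm ⊤ (labelDiff P Q) = ε) ∧
    (∀ M N : MergeTree,
      dHat ⊤ M N = dIr M.toPS N.toPS ∧ dPres ⊤ M N = dIr M.toPS N.toPS) := by
  have part1 : ∀ (M N : MergeTree) (ε : ℝ), Interleaved M.toPS N.toPS ε →
      ∃ (k l : ℕ) (P Q : Pres k l), Compatible P Q ∧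
        IsPresentation P M.toPS ∧ IsPresentation Q N.toPS ∧
        lpNorm ⊤ (labelDiff P Q) = ε := by
    intro M N ε h
    obtain ⟨k, l, P, Q, hc, hPM, hQN, habs⟩ := exists_compatible M N h
    have hk : 0 < k := k_pos hPM
    exact ⟨k, l, P, Q, hc, hPM, hQN, lpNorm_top_const (by omega) _ habs⟩
  have setEq : ∀ M N : MergeTree,
      {c | ∃ (k l : ℕ) (P Q : Pres k l), Compatible P Q ∧ IsPresentation P M.toPS ∧
        IsPresentation Q N.toPS ∧ c = lpNorm ⊤ (labelDiff P Q)}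
      = {ε : ℝ | Interleaved M.toPS N.toPS ε} := by
    intro M N
    ext c
    constructor
    · rintro ⟨k, l, P, Q, hC, hP, hQ, rfl⟩
      have hk : 0 < k := k_pos hP
      have hb : ∀ m : Fin (k+l), |labelDiff P Q m| ≤ lpNorm ⊤ (labelDiff P Q) :=
        fun m => lpNorm_top_le _ m
      have hδ0 : 0 ≤ lpNorm ⊤ (labelDiff P Q) :=
        le_trans (abs_nonneg _) (hb ⟨0, by omega⟩)
      have hγ : ∀ i : Fin k, |P.γ i - Q.γ i| ≤ lpNorm ⊤ (labelDiff P Q) := fun i => by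
        have := hb (Fin.castAdd l i)
        rwa [labelDiff, Fin.append_left] at this
      have hρ : ∀ j : Fin l, |P.ρ j - Q.ρ j| ≤ lpNorm ⊤ (labelDiff P Q) := fun j => by
        have := hb (Fin.natAdd k j)
        rwa [labelDiff, Fin.append_right] at this
      have hIL := compatible_interleaved P Q hC hδ0
        (fun i => by have := (abs_le.1 (hγ i)).1; linarith)
        (fun j => by have := (abs_le.1 (hρ j)).1; linarith)
        (fun i => by have := (abs_le.1 (hγ i)).2; linarith)
        (fun j => by have := (abs_le.1 (hρ j)).2; linarith)
      exact hIL.congr hP.some hQ.some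
    · intro h
      obtain ⟨k, l, P, Q, hC, hP, hQ, hn⟩ := part1 M N c h
      exact ⟨k, l, P, Q, hC, hP, hQ, hn.symm⟩
  have dHat_eq : ∀ M N : MergeTree, dHat ⊤ M N = dIr M.toPS N.toPS := fun M N => by
    rw [dHat, dIr, setEq M N]
  have hbdd : ∀ A B : PersistentSet, BddBelow {ε : ℝ | Interleaved A B ε} :=
    fun A B => ⟨0, fun x hx => hx.choose⟩
  have hne : ∀ A B : MergeTree, {ε : ℝ | Interleaved A.toPS B.toPS ε}.Nonempty :=
    fun A B => exists_interleaving A B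
  have dIr_nonneg : ∀ A B : PersistentSet, 0 ≤ dIr A B :=
    fun A B => Real.sInf_nonneg fun x hx => hx.choose
  have dIr_tri : ∀ A B C : MergeTree,
      dIr A.toPS C.toPS ≤ dIr A.toPS B.toPS + dIr B.toPS C.toPS := by
    intro A B C
    have key : ∀ ε1 ∈ {ε : ℝ | Interleaved A.toPS B.toPS ε},
        dIr A.toPS C.toPS - ε1 ≤ dIr B.toPS C.toPS := by
      intro ε1 h1
      refine le_csInf (hne B C) fun ε2 h2 => ?_
      have := csInf_le (hbdd A.toPS C.toPS) (Interleaved.comp h1 h2)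
      rw [dIr]; linarith
    have h5 : dIr A.toPS C.toPS - dIr B.toPS C.toPS ≤ dIr A.toPS B.toPS := by
      refine le_csInf (hne A B) fun ε1 h1 => ?_
      linarith [key ε1 h1]
    linarith
  have dIr_self : ∀ A : MergeTree, dIr A.toPS A.toPS ≤ 0 :=
    fun A => csInf_le (hbdd _ _) (interleaved_self _)
  have chain : ∀ (n : ℕ) (Z : Fin (n + 1) → MergeTree),
      dIr (Z 0).toPS (Z (Fin.last n)).toPS ≤
        ∑ i : Fin n, dIr (Z i.castSucc).toPS (Z i.succ).toPS := by
    intro n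
    induction n with
    | zero => intro Z; simpa using dIr_self (Z 0)
    | succ n ih =>
      intro Z
      have h1 := ih (fun i => Z i.castSucc)
      simp only [Fin.castSucc_zero] at h1
      rw [Fin.sum_univ_castSucc, Fin.succ_last]
      have h3 := dIr_tri (Z 0) (Z ((Fin.last n).castSucc)) (Z (Fin.last (n+1)))
      have h4 : (∑ i : Fin n, dIr (Z i.castSucc.castSucc).toPS (Z i.castSucc.succ).toPS)
          = ∑ i : Fin n, dIr (Z i.castSucc.castSucc).toPS (Z i.succ.castSucc).toPS :=
        Finset.sum_congr rfl fun i _ => by rw [Fin.succ_castSucc]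
      rw [h4]
      linarith
  have dPres_eq : ∀ M N : MergeTree, dPres ⊤ M N = dIr M.toPS N.toPS := by
    intro M N
    have hmem : dIr M.toPS N.toPS ∈ {c | ∃ (n : ℕ) (Z : Fin (n + 1) → MergeTree), Z 0 = M ∧
        Z (Fin.last n) = N ∧ c = ∑ i : Fin n, dHat ⊤ (Z i.castSucc) (Z i.succ)} := by
      refine ⟨1, ![M, N], rfl, rfl, ?_⟩
      rw [Fin.sum_univ_one]
      show dIr M.toPS N.toPS = dHat ⊤ M N
      rw [dHat_eq]
    have hbddP : BddBelow {c | ∃ (n : ℕ) (Z : Fin (n + 1) → MergeTree), Z 0 = M ∧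
        Z (Fin.last n) = N ∧ c = ∑ i : Fin n, dHat ⊤ (Z i.castSucc) (Z i.succ)} := by
      refine ⟨0, ?_⟩
      rintro c ⟨n, Z, -, -, rfl⟩
      exact Finset.sum_nonneg fun i _ => by rw [dHat_eq]; exact dIr_nonneg _ _
    rw [dPres]
    refine le_antisymm (csInf_le hbddP hmem) (le_csInf ⟨_, hmem⟩ ?_)
    rintro c ⟨n, Z, rfl, rfl, rfl⟩
    calc dIr (Z 0).toPS (Z (Fin.last n)).toPS
        ≤ ∑ i : Fin n, dIr (Z i.castSucc).toPS (Z i.succ).toPS := chain n Z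
      _ = ∑ i : Fin n, dHat ⊤ (Z i.castSucc) (Z i.succ) :=
        Finset.sum_congr rfl fun i _ => (dHat_eq _ _).symm
  exact ⟨part1, fun M N => ⟨dHat_eq M N, dPres_eq M N⟩⟩
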